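/- Let T = (V_T, E_T) be a finite forest with maximum degree bounded by d ≥ 2, let ε, δ ∈ (0,1/2), and let k = 481·d²/(δε). Then there exists a function f : V_T → 2^{V_T} such that: (1) for all v ∈ V_T, v ∈ f(v); (2) for all v ∈ V_T and all w ∈ f(v), f(w) = f(v); (3) for all v ∈ V_T, |f(v)| ≤ k; (4) for all v ∈ V_T, the subgraph of T induced by f(v) is connected; and (5) the set C of vertices w ∈ V_T such that f(w) is a (k, δ, 2)-isolated neighborhood of w in T has size at least (1 − ε/60)|V_T|. -/

import Mathlib

/-- The external neighborhood `N(S)` of a set `S` of vertices: vertices not in `S`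
that are adjacent to at least one vertex of `S`. Its cardinality is the cut-size `η(S)`. -/
def cutSet {V : Type} (G : SimpleGraph V) (S : Set V) : Set V :=
  {u | u ∉ S ∧ ∃ w ∈ S, G.Adj w u}

/-- `S` is a `(k, δ, c)`-isolated neighborhood of `v` in `G`: it contains `v`, induces a
connected subgraph, has size at most `k`, cut-size `η(S) ≤ c`, and vertex conductance
`φ(S) = η(S)/|S| ≤ δ`. -/
def IsIsoNbhd {V : Type} (G : SimpleGraph V) (v : V) (S : Set V) (k δ : ℝ) (c : ℕ) : Prop :=
  v ∈ S ∧ (G.induce S).Connected ∧ (S.ncard : ℝ) ≤ k ∧ (cutSet G S).ncard ≤ c ∧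
    ((cutSet G S).ncard : ℝ) / (S.ncard : ℝ) ≤ δ

open SimpleGraph

set_option linter.unusedSectionVars false

namespace ForestAux
variable {V : Type} [Fintype V] {T : SimpleGraph V}

/-- In a path, at most one edge is incident to the start vertex. -/
lemma start_edge_unique {v w : V} {r : T.Walk v w} (hr : r.IsPath) {x y : V}
    (hx : s(v, x) ∈ r.edges) (hy : s(v, y) ∈ r.edges) : x = y := by
  induction r with
  | nil => simp at hx
  | @cons a b c h q ih =>
    rw [Walk.cons_isPath_iff] at hr
    rw [Walk.edges_cons, List.mem_cons] at hx hy
    have hxb : ∀ z : V, s(a,z) = s(a,b) → z = b := by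
      intro z he
      rcases Sym2.eq_iff.mp he with ⟨_, h2⟩ | ⟨h1, _⟩
      · exact h2
      · exact absurd (h1 ▸ h) (T.loopless.irrefl b)
    rcases hx with hx | hx
    · rcases hy with hy | hy
      · rw [hxb x hx, hxb y hy]
      · exact absurd (Walk.fst_mem_support_of_mem_edges q hy) hr.2
    · exact absurd (Walk.fst_mem_support_of_mem_edges q hx) hr.2

/-- Every nonempty subset of a finite acyclic graph contains a vertex with at most
one neighbour inside the subset. -/
lemma exists_leaf (hacyc : T.IsAcyclic) (S : Set V) (hS : S.Nonempty) :
    ∃ v ∈ S, ({u ∈ S | T.Adj v u}).ncard ≤ 1 := by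
  classical
  obtain ⟨s, hs⟩ := hS
  set n := Fintype.card V with hn
  set P : ℕ → Prop := fun l => ∃ (u v : V) (p : T.Walk u v), p.IsPath ∧
    (∀ x ∈ p.support, x ∈ S) ∧ p.length = l with hP
  have hP0 : P 0 := ⟨s, s, Walk.nil, by simp [Walk.isPath_def], by simpa using hs, rfl⟩
  have hbound : ∀ l, P l → l ≤ n := by
    rintro l ⟨u, v, p, hp, -, rfl⟩
    exact le_of_lt (by simpa [hn] using hp.length_lt)
  set L := Nat.findGreatest P n with hL
  have hPL : P L := Nat.findGreatest_spec (P := P) (hbound 0 hP0) hP0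
  obtain ⟨u, v, p, hp, hsupp, hplen⟩ := hPL
  refine ⟨v, hsupp v p.end_mem_support, ?_⟩
  by_contra hcard
  push_neg at hcard
  obtain ⟨w₁, hw₁, w₂, hw₂, hne⟩ := (Set.one_lt_ncard (Set.toFinite _)).mp hcard
  set q := p.reverse with hq
  have hqpath : q.IsPath := hp.reverse
  have hqsupp : ∀ x ∈ q.support, x ∈ S := by
    intro x hx; exact hsupp x (by simpa [hq, Walk.support_reverse] using hx)
  -- every neighbour of v inside S lies on the path
  have hmem : ∀ w, w ∈ S → T.Adj v w → w ∈ q.support := by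
    intro w hwS hadj
    by_contra hws
    have hnew : (Walk.cons hadj.symm q).IsPath := by
      rw [Walk.cons_isPath_iff]; exact ⟨hqpath, hws⟩
    have hlen : L + 1 ≤ n := le_of_lt (by simpa [hq, Walk.length_reverse, hplen, hn] using hnew.length_lt)
    have : ¬ P (L + 1) :=
      Nat.findGreatest_is_greatest (Nat.lt_succ_self L) hlen
    exact this ⟨w, u, Walk.cons hadj.symm q, hnew, by
      intro x hx
      rcases (by simpa using hx : x = w ∨ x ∈ q.support) with rfl | hx
      · exact hwS
      · exact hqsupp x hx, by simp [hplen, hq]⟩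
  -- each neighbour on the path yields an edge s(v, w) ∈ q.edges, else a cycle
  have hedge : ∀ w, w ∈ S → T.Adj v w → s(v, w) ∈ q.edges := by
    intro w hwS hadj
    have hwq : w ∈ q.support := hmem w hwS hadj
    set r := q.takeUntil w hwq with hr
    have hrpath : r.IsPath := hqpath.takeUntil hwq
    have : ¬ (Walk.cons hadj.symm r).IsCycle := hacyc _
    rw [Walk.cons_isCycle_iff] at this
    push_neg at this
    have hin : s(w, v) ∈ r.edges := this hrpath
    have := q.edges_takeUntil_subset hwq hin
    rwa [Sym2.eq_swap] at this
  have := start_edge_unique hqpath (hedge w₁ hw₁.1 hw₁.2) (hedge w₂ hw₂.1 hw₂.2)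
  exact hne this


lemma exists_elim_order (hacyc : T.IsAcyclic) :
    ∃ (idx : V → ℕ) (p : V → Option V),
      Function.Injective idx ∧
      (∀ u w, p u = some w → T.Adj u w ∧ idx u < idx w) ∧
      (∀ u w, T.Adj u w → idx u < idx w → p u = some w) := by
  classical
  suffices h : ∀ (S : Finset V), ∃ (idx : V → ℕ) (p : V → Option V),
      Set.InjOn idx ↑S ∧
      (∀ u ∈ S, ∀ w, p u = some w → w ∈ S ∧ T.Adj u w ∧ idx u < idx w) ∧
      (∀ u ∈ S, ∀ w ∈ S, T.Adj u w → idx u < idx w → p u = some w) by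
    obtain ⟨idx, p, h1, h2, h3⟩ := h Finset.univ
    refine ⟨idx, p, fun a b hab => h1 (by simp) (by simp) hab, ?_, ?_⟩
    · intro u w hp; exact ⟨(h2 u (by simp) w hp).2.1, (h2 u (by simp) w hp).2.2⟩
    · intro u w ha hlt; exact h3 u (by simp) w (by simp) ha hlt
  intro S
  induction S using Finset.strongInductionOn with
  | _ S ih =>
  rcases S.eq_empty_or_nonempty with rfl | hSne
  · exact ⟨fun _ => 0, fun _ => none, by simp [Set.InjOn], by simp, by simp⟩
  obtain ⟨v, hvS, hvdeg⟩ := exists_leaf hacyc (↑S) (by exact_mod_cast hSne)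
  obtain ⟨idx', p', h1, h2, h3⟩ := ih (S.erase v) (Finset.erase_ssubset hvS)
  have hNcases : ({u ∈ (↑S : Set V) | T.Adj v u}) = ∅ ∨
      ∃ w0, ({u ∈ (↑S : Set V) | T.Adj v u}) = {w0} :=
    (Set.ncard_le_one_iff_eq (Set.toFinite _)).mp hvdeg
  have main : ∀ pv : Option V,
      (∀ w, pv = some w → w ∈ S ∧ T.Adj v w ∧ w ≠ v) →
      (∀ w ∈ S, T.Adj v w → pv = some w) →
      ∃ (idx : V → ℕ) (p : V → Option V),
      Set.InjOn idx ↑S ∧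
      (∀ u ∈ S, ∀ w, p u = some w → w ∈ S ∧ T.Adj u w ∧ idx u < idx w) ∧
      (∀ u ∈ S, ∀ w ∈ S, T.Adj u w → idx u < idx w → p u = some w) := by
    intro pv hpv1 hpv2
    refine ⟨fun u => if u = v then 0 else idx' u + 1,
            Function.update p' v pv, ?_, ?_, ?_⟩
    · intro a ha b hb hab
      by_cases hav : a = v <;> by_cases hbv : b = v
      · rw [hav, hbv]
      · exfalso
        have h0 : (0:ℕ) = idx' b + 1 := by simpa [hav, hbv] using hab
        omega
      · exfalso
        have h0 : idx' a + 1 = 0 := by simpa [hav, hbv] using hab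
        omega
      · simp only [if_neg hav, if_neg hbv] at hab
        exact h1 (Finset.mem_coe.mpr (Finset.mem_erase.mpr ⟨hav, ha⟩))
          (Finset.mem_coe.mpr (Finset.mem_erase.mpr ⟨hbv, hb⟩)) (by omega)
    · intro u hu w hp
      by_cases huv : u = v
      · rw [huv, Function.update_self] at hp
        obtain ⟨hw1, hw2, hw3⟩ := hpv1 w hp
        refine ⟨hw1, huv ▸ hw2, ?_⟩
        simp [huv, hw3]
      · rw [Function.update_of_ne huv] at hp
        obtain ⟨hw1, hw2, hw3⟩ := h2 u (Finset.mem_erase.mpr ⟨huv, hu⟩) w hp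
        obtain ⟨hwv, hwS⟩ := Finset.mem_erase.mp hw1
        refine ⟨hwS, hw2, ?_⟩
        simp [huv, hwv, hw3]
    · intro u hu w hw ha hlt
      by_cases huv : u = v
      · rw [huv, Function.update_self]
        exact hpv2 w hw (huv ▸ ha)
      · by_cases hwv : w = v
        · exfalso
          have h0 : idx' u + 1 < 0 := by simpa [huv, hwv] using hlt
          omega
        · rw [Function.update_of_ne huv]
          have hlt' : idx' u + 1 < idx' w + 1 := by simpa [huv, hwv] using hlt
          exact h3 u (Finset.mem_erase.mpr ⟨huv, hu⟩) w (Finset.mem_erase.mpr ⟨hwv, hw⟩)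
            ha (by omega)
  rcases hNcases with hemp | ⟨w0, hw0⟩
  · refine main none (by simp) ?_
    intro w hwS hadj
    have : w ∈ ({u ∈ (↑S : Set V) | T.Adj v u}) := ⟨hwS, hadj⟩
    rw [hemp] at this; exact absurd this (Set.notMem_empty w)
  · have hw0mem : w0 ∈ ({u ∈ (↑S : Set V) | T.Adj v u}) := by rw [hw0]; rfl
    refine main (some w0) ?_ ?_
    · rintro w hw
      obtain rfl : w0 = w := by injection hw
      exact ⟨hw0mem.1, hw0mem.2, fun h => T.loopless.irrefl v (h ▸ hw0mem.2)⟩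
    · intro w hwS hadj
      have : w ∈ ({u ∈ (↑S : Set V) | T.Adj v u}) := ⟨hwS, hadj⟩
      rw [hw0] at this
      rw [this]

def Dset (p : V → Option V) (P : Set V) : Set V := {w | w ∉ P ∧ ∃ u ∈ P, p w = some u}

/-- live tokens: closed vertices whose parent is not closed. -/
def Tok (p : V → Option V) (C : Set V) : Set V := {w | w ∈ C ∧ ∃ u, p w = some u ∧ u ∉ C}

lemma ncard_biUnion_le (A : Set V) (hA : A.Finite) (g : V → Set V) (m : ℕ)
    (hg : ∀ a ∈ A, (g a).ncard ≤ m) : (⋃ a ∈ A, g a).ncard ≤ A.ncard * m := by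
  classical
  revert hg
  refine Set.Finite.induction_on
    (motive := fun A _ => (∀ a ∈ A, (g a).ncard ≤ m) → (⋃ a ∈ A, g a).ncard ≤ A.ncard * m)
    A hA ?_ ?_
  · simp
  · rintro a A' haA' hA' ih hg
    rw [Set.biUnion_insert]
    calc ((g a) ∪ ⋃ x ∈ A', g x).ncard ≤ (g a).ncard + (⋃ x ∈ A', g x).ncard :=
          Set.ncard_union_le _ _
      _ ≤ m + A'.ncard * m := by
          gcongr
          · exact hg a (Set.mem_insert a A')
          · exact ih (fun x hx => hg x (Set.mem_insert_of_mem a hx))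
      _ = (A'.ncard + 1) * m := by ring
      _ ≤ (insert a A').ncard * m := by
          gcongr
          rw [Set.ncard_insert_of_notMem haA' hA']

lemma induce_singleton_connected (v : V) : (T.induce ({v} : Set V)).Connected := by
  rw [SimpleGraph.connected_iff]
  constructor
  · intro a b
    have : a = b := Subtype.ext (by
      have ha := a.2; have hb := b.2
      simp only [Set.mem_singleton_iff] at ha hb
      rw [ha, hb])
    exact this ▸ Reachable.refl a
  · exact ⟨⟨v, rfl⟩⟩

lemma connected_insert_biUnion (v : V) (A : Set V) (hA : A.Finite) (f : V → Set V)
    (h1 : ∀ u ∈ A, (T.induce (f u)).Connected) (h2 : ∀ u ∈ A, u ∈ f u)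
    (h3 : ∀ u ∈ A, T.Adj v u) :
    (T.induce (insert v (⋃ u ∈ A, f u))).Connected := by
  classical
  revert h1 h2 h3
  refine Set.Finite.induction_on
    (motive := fun A _ => (∀ u ∈ A, (T.induce (f u)).Connected) → (∀ u ∈ A, u ∈ f u) →
      (∀ u ∈ A, T.Adj v u) → (T.induce (insert v (⋃ u ∈ A, f u))).Connected)
    A hA ?_ ?_
  · intro _ _ _
    have he : insert v (⋃ u ∈ (∅ : Set V), f u) = {v} := by simp
    rw [he]
    exact induce_singleton_connected v
  · rintro a A' haA' hA' ih h1 h2 h3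
    have hinsa : (T.induce (insert v (f a))).Connected := by
      have hpair : (T.induce ({v, a} : Set V)).Connected :=
        induce_pair_connected_of_adj (h3 a (Set.mem_insert a A'))
      have : ({v, a} : Set V) ∪ f a = insert v (f a) := by
        rw [Set.insert_union]
        congr 1
        exact Set.union_eq_self_of_subset_left
          (Set.singleton_subset_iff.mpr (h2 a (Set.mem_insert a A')))
      rw [← this]
      exact induce_union_connected hpair.preconnected (h1 a (Set.mem_insert a A')).preconnected ⟨a, by simp, h2 a (by simp)⟩
    have hIH : (T.induce (insert v (⋃ u ∈ A', f u))).Connected :=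
      ih (fun u hu => h1 u (Set.mem_insert_of_mem a hu))
        (fun u hu => h2 u (Set.mem_insert_of_mem a hu))
        (fun u hu => h3 u (Set.mem_insert_of_mem a hu))
    have hset : insert v (⋃ u ∈ insert a A', f u)
        = (insert v (⋃ u ∈ A', f u)) ∪ (insert v (f a)) := by
      rw [Set.biUnion_insert, Set.insert_union_distrib, Set.union_comm]
    rw [hset]
    exact induce_union_connected hIH.preconnected hinsa.preconnected ⟨v, by simp, by simp⟩

lemma tok_ncard_le (p : V → Option V) (C P' ex : Set V)
    (hstr : ∀ w ∈ P', ∀ u, p w = some u → u ∈ P' ∨ w ∈ ex)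
    (hDsub : Dset p P' ⊆ Tok p C) :
    ((Tok p (C ∪ P')).ncard : ℝ) ≤ (Tok p C).ncard - (Dset p P').ncard + ex.ncard := by
  have hsub : Tok p (C ∪ P') ⊆ ((Tok p C) \ (Dset p P')) ∪ ex := by
    rintro w ⟨hwC, u, hpu, hunot⟩
    rcases hwC with hwC | hwP
    · left
      refine ⟨⟨hwC, u, hpu, fun h => hunot (Or.inl h)⟩, ?_⟩
      rintro ⟨hwnP, u', hu'P, hpu'⟩
      rw [hpu] at hpu'
      obtain rfl : u' = u := Option.some_injective _ hpu'.symm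
      exact hunot (Or.inr hu'P)
    · rcases hstr w hwP u hpu with h | h
      · exact absurd (Or.inr h) hunot
      · exact Or.inr h
  calc ((Tok p (C ∪ P')).ncard : ℝ) ≤ ((((Tok p C) \ (Dset p P')) ∪ ex).ncard : ℝ) := by
        exact_mod_cast Set.ncard_le_ncard hsub (Set.toFinite _)
    _ ≤ (((Tok p C) \ (Dset p P')).ncard : ℝ) + ex.ncard := by
        exact_mod_cast Set.ncard_union_le _ _
    _ = (Tok p C).ncard - (Dset p P').ncard + ex.ncard := by
        rw [Set.ncard_diff hDsub (Set.toFinite _)]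
        rw [Nat.cast_sub (Set.ncard_le_ncard hDsub (Set.toFinite _))]

lemma cut_subset (p : V → Option V)
    (Hadj : ∀ u w, T.Adj u w ↔ (p u = some w ∨ p w = some u))
    (Q : Set V) (m : V)
    (hstr : ∀ x ∈ Q, ∀ w, p x = some w → w ∈ Q ∨ x = m) :
    cutSet T Q ⊆ Dset p Q ∪ {w | p m = some w} := by
  rintro x ⟨hxQ, u, huQ, hadj⟩
  rcases (Hadj u x).mp hadj with h | h
  · rcases hstr u huQ x h with h' | rfl
    · exact absurd h' hxQ
    · exact Or.inr h
  · exact Or.inl ⟨hxQ, u, huQ, h⟩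

lemma mkIso (T : SimpleGraph V) (x : V) (Q : Set V) (hx : x ∈ Q)
    (hconn : (T.induce Q).Connected) (kreal δ : ℝ) (hδ : 0 < δ)
    (hsize : (Q.ncard : ℝ) ≤ kreal)
    (c : ℕ) (hcut : (cutSet T Q).ncard ≤ c) (hc : c ≤ 2)
    (hcond : (c : ℝ) ≤ δ * Q.ncard) :
    IsIsoNbhd T x Q kreal δ 2 := by
  have hQpos : 0 < Q.ncard := (Set.ncard_pos (Set.toFinite _)).mpr ⟨x, hx⟩
  refine ⟨hx, hconn, hsize, le_trans hcut hc, ?_⟩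
  rw [div_le_iff₀ (by exact_mod_cast hQpos)]
  calc ((cutSet T Q).ncard : ℝ) ≤ c := by exact_mod_cast hcut
    _ ≤ δ * Q.ncard := hcond


lemma pset_ncard (p : V → Option V) (x : V) : ({w | p x = some w} : Set V).ncard ≤ 1 := by
  cases h : p x with
  | none =>
    have : ({w | p x = some w} : Set V) = ∅ := by
      ext w; simp [h]
    simp [this]
  | some w0 =>
    have : ({w | p x = some w} : Set V) = {w0} := by
      ext w; simp [h, eq_comm]
    simp [this]

structure Pack (T : SimpleGraph V) (p : V → Option V)
    (sm smid Kmax κ : ℕ) (δ ε kreal : ℝ) (U : Set V) where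
  f : V → Set V
  C : Set V
  bad : Set V
  mem : ∀ v ∈ U, v ∈ f v
  subU : ∀ v ∈ U, f v ⊆ U
  eqcl : ∀ v ∈ U, ∀ w ∈ f v, f w = f v
  conn : ∀ v ∈ U, (T.induce (f v)).Connected
  Csub : C ⊆ U
  badsub : bad ⊆ C
  closedSub : ∀ v ∈ C, f v ⊆ C
  iso : ∀ v ∈ C, v ∉ bad → IsIsoNbhd T v (f v) kreal δ 2
  size : ∀ v ∈ U, (f v).ncard ≤ Kmax
  top : ∀ v ∈ U, v ∉ C → ∃ m ∈ f v, (∀ w, p m = some w → w ∉ U) ∧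
        (∀ u ∈ f v, u ≠ m → ∃ w ∈ f v, p u = some w)
  openb : ∀ v ∈ U, v ∉ C → (Dset p (f v)).ncard ≤ 1 ∧
        ((Dset p (f v)).ncard = 0 → (f v).ncard < smid) ∧
        ((Dset p (f v)).ncard = 1 → (f v).ncard < sm)
  count : (bad.ncard : ℝ) + κ * ((Tok p C).ncard : ℝ) ≤ ε/60 * (C.ncard : ℝ)

variable {p : V → Option V} {sm smid Kmax κ : ℕ} {δ ε kreal : ℝ} {U : Set V}

lemma Pack.openNotC (pk : Pack T p sm smid Kmax κ δ ε kreal U) :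
    ∀ v ∈ U, v ∉ pk.C → ∀ w ∈ pk.f v, w ∉ pk.C := by
  intro v hv hvC w hw hwC
  have h1 : pk.f w = pk.f v := pk.eqcl v hv w hw
  have h2 : pk.f w ⊆ pk.C := pk.closedSub w hwC
  exact hvC (h2 (h1.symm ▸ pk.mem v hv))

lemma Pack.open_small (pk : Pack T p sm smid Kmax κ δ ε kreal U)
    (hsm_smid : sm ≤ smid) :
    ∀ v ∈ U, v ∉ pk.C → (pk.f v).ncard < smid := by
  intro v hv hvC
  obtain ⟨hb1, hb0, hb1'⟩ := pk.openb v hv hvC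
  interval_cases h : (Dset p (pk.f v)).ncard
  · exact hb0 rfl
  · exact lt_of_lt_of_le (hb1' rfl) hsm_smid

lemma step (T : SimpleGraph V) (p : V → Option V) (idx : V → ℕ)
    (Hinj : Function.Injective idx)
    (Hadj : ∀ u w, T.Adj u w ↔ (p u = some w ∨ p w = some u))
    (Hlt : ∀ u w, p u = some w → idx u < idx w)
    (d : ℕ) (hδ0 : 0 < δ) (hε0 : 0 < ε)
    (hdeg : ∀ v : V, (T.neighborSet v).ncard ≤ d)
    (hsm1 : 1 ≤ sm) (hsmid1 : 1 ≤ smid) (hsm_smid : sm ≤ smid)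
    (hsmidK : smid ≤ Kmax) (hdsmidK : 1 + d * (smid - 1) ≤ Kmax)
    (hκ1 : 1 + d * (sm - 1) ≤ κ) (hκs : (κ:ℝ) ≤ ε/60 * smid)
    (hcond1 : (1:ℝ) ≤ δ * smid) (hcond2 : (2:ℝ) ≤ δ * sm)
    (hKk : (Kmax:ℝ) ≤ kreal)
    (i : ℕ) (v : V) (hvi : idx v = i)
    (pk : Pack T p sm smid Kmax κ δ ε kreal {x | idx x < i}) :
    Nonempty (Pack T p sm smid Kmax κ δ ε kreal {x | idx x < i + 1}) := by
  classical
  set U : Set V := {x | idx x < i} with hU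
  set U' : Set V := {x | idx x < i + 1} with hU'def
  have hvU : v ∉ U := by simp [hU, hvi]
  have hvU' : v ∈ U' := by simp [hU'def, hvi]
  have hUU' : U ⊆ U' := fun x hx => by simp only [hU'def, Set.mem_setOf_eq]; exact Nat.lt_succ_of_lt hx
  have hU' : ∀ x, x ∈ U' ↔ x = v ∨ x ∈ U := by
    intro x
    simp only [hU'def, hU, Set.mem_setOf_eq]
    constructor
    · intro hx
      rcases Nat.lt_succ_iff_lt_or_eq.mp hx with h | h
      · exact Or.inr h
      · exact Or.inl (Hinj (h.trans hvi.symm))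
    · rintro (rfl | hx)
      · omega
      · omega
  set A : Set V := {u | p u = some v ∧ u ∉ pk.C} with hAdef
  have hA_U : ∀ u ∈ A, u ∈ U := by
    intro u hu
    have := Hlt u v hu.1
    simp only [hU, Set.mem_setOf_eq]; omega
  -- each attaching part has top = u
  have hAtop : ∀ u ∈ A, ∀ x ∈ pk.f u, x ≠ u → ∃ w ∈ pk.f u, p x = some w := by
    intro u hu x hx hxu
    obtain ⟨m, hmP, hmout, hrest⟩ := pk.top u (hA_U u hu) hu.2
    have hmu : m = u := by
      by_contra hne
      obtain ⟨w, hwP, hpw⟩ := hrest u (pk.mem u (hA_U u hu)) (fun h => hne h.symm)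
      rw [hu.1] at hpw
      obtain rfl : v = w := Option.some_injective _ hpw
      exact hvU (pk.subU u (hA_U u hu) hwP)
    exact hrest x hx (hmu ▸ hxu)
  have hu_top : ∀ u ∈ A, ∀ x ∈ pk.f u, ∀ w, p x = some w → w ∈ pk.f u ∨ x = u := by
    intro u hu x hx w hpw
    by_cases hxu : x = u
    · exact Or.inr hxu
    · obtain ⟨w', hw'P, hpw'⟩ := hAtop u hu x hx hxu
      rw [hpw] at hpw'
      obtain rfl : w = w' := Option.some_injective _ hpw'
      exact Or.inl hw'P
  set P' : Set V := insert v (⋃ u ∈ A, pk.f u) with hP'def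
  have hvP : v ∈ P' := Set.mem_insert v _
  have hfu_subP : ∀ u ∈ A, pk.f u ⊆ P' := by
    intro u hu x hx
    exact Set.mem_insert_of_mem v (Set.mem_biUnion hu hx)
  have hmemP : ∀ x, x ∈ P' ↔ x = v ∨ ∃ u ∈ A, x ∈ pk.f u := by
    intro x; simp [hP'def]
  have hPnotC : ∀ x ∈ P', x ∉ pk.C := by
    intro x hx
    rcases (hmemP x).mp hx with rfl | ⟨u, hu, hxu⟩
    · exact fun h => hvU (pk.Csub h)
    · exact pk.openNotC u (hA_U u hu) hu.2 x hxu
  have hPsubU' : P' ⊆ U' := by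
    intro x hx
    rcases (hmemP x).mp hx with rfl | ⟨u, hu, hxu⟩
    · exact hvU'
    · exact hUU' (pk.subU u (hA_U u hu) hxu)
  have hPsubU : ∀ x ∈ P', x ≠ v → x ∈ U := by
    intro x hx hxv
    rcases (hmemP x).mp hx with rfl | ⟨u, hu, hxu⟩
    · exact absurd rfl hxv
    · exact pk.subU u (hA_U u hu) hxu
  have hstr : ∀ x ∈ P', ∀ w, p x = some w → w ∈ P' ∨ x = v := by
    intro x hx w hpw
    rcases (hmemP x).mp hx with rfl | ⟨u, hu, hxu⟩
    · exact Or.inr rfl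
    · rcases hu_top u hu x hxu w hpw with h | rfl
      · exact Or.inl (hfu_subP u hu h)
      · rw [hu.1] at hpw
        obtain rfl : v = w := Option.some_injective _ hpw
        exact Or.inl hvP
  have htopP2 : ∀ x ∈ P', x ≠ v → ∃ w ∈ P', p x = some w := by
    intro x hx hxv
    rcases (hmemP x).mp hx with rfl | ⟨u, hu, hxu⟩
    · exact absurd rfl hxv
    · by_cases hxu' : x = u
      · exact ⟨v, hvP, hxu' ▸ hu.1⟩
      · obtain ⟨w, hwP, hpw⟩ := hAtop u hu x hxu hxu'
        exact ⟨w, hfu_subP u hu hwP, hpw⟩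
  have htopP1 : ∀ w, p v = some w → w ∉ U' := by
    intro w hpw
    have := Hlt v w hpw
    simp only [hU'def, Set.mem_setOf_eq]; omega
  have hAfin : A.Finite := Set.toFinite _
  have hconnP : (T.induce P').Connected := by
    refine connected_insert_biUnion v A hAfin pk.f
      (fun u hu => pk.conn u (hA_U u hu)) (fun u hu => pk.mem u (hA_U u hu)) ?_
    intro u hu
    exact ((Hadj u v).mpr (Or.inl hu.1)).symm
  have hAd : A.ncard ≤ d := by
    refine le_trans (Set.ncard_le_ncard ?_ (Set.toFinite _)) (hdeg v)
    intro u hu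
    exact ((Hadj u v).mpr (Or.inl hu.1)).symm
  have hpartsize : ∀ u ∈ A, (pk.f u).ncard ≤ smid - 1 := by
    intro u hu
    have := pk.open_small hsm_smid u (hA_U u hu) hu.2
    omega
  have hsizeP : P'.ncard ≤ 1 + d * (smid - 1) := by
    calc P'.ncard ≤ (⋃ u ∈ A, pk.f u).ncard + 1 := Set.ncard_insert_le _ _
      _ ≤ A.ncard * (smid - 1) + 1 := by
          gcongr
          exact ncard_biUnion_le A hAfin pk.f (smid - 1) hpartsize
      _ ≤ d * (smid - 1) + 1 := by gcongr
      _ = 1 + d * (smid - 1) := by ring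
  have hDsubTok : Dset p P' ⊆ Tok p pk.C := by
    rintro w ⟨hwP, u', hu'P, hpw⟩
    have hwU : w ∈ U := by
      have h1 := Hlt w u' hpw
      have h2 : u' ∈ U' := hPsubU' hu'P
      simp only [hU'def, Set.mem_setOf_eq] at h2
      simp only [hU, Set.mem_setOf_eq]; omega
    have hwC : w ∈ pk.C := by
      by_contra hwC
      rcases (hmemP u').mp hu'P with rfl | ⟨u, huA, hu'fu⟩
      · exact hwP (hfu_subP w ⟨hpw, hwC⟩ (pk.mem w hwU))
      · have huU : u ∈ U := hA_U u huA
        have hu'w : u' ∉ pk.f w := by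
          intro h
          have e1 : pk.f u' = pk.f u := pk.eqcl u huU u' hu'fu
          have e2 : pk.f u' = pk.f w := pk.eqcl w hwU u' h
          have e3 : pk.f w = pk.f u := by rw [← e2, e1]
          exact hwP (hfu_subP u huA (e3 ▸ pk.mem w hwU))
        obtain ⟨m, hm, hmout, hrest⟩ := pk.top w hwU hwC
        by_cases hwm : w = m
        · exact (hwm ▸ hmout) u' hpw (pk.subU u huU hu'fu)
        · obtain ⟨w', hw'f, hpw'⟩ := hrest w (pk.mem w hwU) hwm
          rw [hpw] at hpw'
          obtain rfl : u' = w' := Option.some_injective _ hpw'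
          exact hu'w hw'f
    exact ⟨hwC, u', hpw, hPnotC u' hu'P⟩
  set f' : V → Set V := fun w => if w ∈ P' then P' else pk.f w with hf'def
  have hf'in : ∀ x ∈ P', f' x = P' := by intro x hx; simp [hf'def, hx]
  have hf'out : ∀ x, x ∉ P' → f' x = pk.f x := by intro x hx; simp [hf'def, hx]
  have hP'disj : ∀ x ∈ U, x ∉ P' → ∀ w ∈ pk.f x, w ∉ P' := by
    intro x hxU hxP w hw hwP
    rcases (hmemP w).mp hwP with rfl | ⟨u, hu, hwu⟩
    · exact hvU (pk.subU x hxU hw)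
    · have e1 : pk.f w = pk.f x := pk.eqcl x hxU w hw
      have e2 : pk.f w = pk.f u := pk.eqcl u (hA_U u hu) w hwu
      have hxin : x ∈ pk.f u := by
        rw [← e2, e1]; exact pk.mem x hxU
      exact hxP (hfu_subP u hu hxin)
  have hUof : ∀ x ∈ U', x ∉ P' → x ∈ U := by
    intro x hx hxP
    rcases (hU' x).mp hx with rfl | h
    · exact absurd hvP hxP
    · exact h
  have hmem' : ∀ x ∈ U', x ∈ f' x := by
    intro x hx
    by_cases hxP : x ∈ P'
    · rw [hf'in x hxP]; exact hxP
    · rw [hf'out x hxP]; exact pk.mem x (hUof x hx hxP)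
  have hsub' : ∀ x ∈ U', f' x ⊆ U' := by
    intro x hx
    by_cases hxP : x ∈ P'
    · rw [hf'in x hxP]; exact hPsubU'
    · rw [hf'out x hxP]; exact (pk.subU x (hUof x hx hxP)).trans hUU'
  have heqcl' : ∀ x ∈ U', ∀ w ∈ f' x, f' w = f' x := by
    intro x hx w hw
    by_cases hxP : x ∈ P'
    · rw [hf'in x hxP] at hw ⊢; exact hf'in w hw
    · rw [hf'out x hxP] at hw ⊢
      have hxU : x ∈ U := hUof x hx hxP
      have hwP : w ∉ P' := hP'disj x hxU hxP w hw
      rw [hf'out w hwP]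
      exact pk.eqcl x hxU w hw
  have hconn' : ∀ x ∈ U', (T.induce (f' x)).Connected := by
    intro x hx
    by_cases hxP : x ∈ P'
    · rw [hf'in x hxP]; exact hconnP
    · rw [hf'out x hxP]; exact pk.conn x (hUof x hx hxP)
  have hsizeK : P'.ncard ≤ Kmax := le_trans hsizeP hdsmidK
  have hsize' : ∀ x ∈ U', (f' x).ncard ≤ Kmax := by
    intro x hx
    by_cases hxP : x ∈ P'
    · rw [hf'in x hxP]; exact hsizeK
    · rw [hf'out x hxP]; exact pk.size x (hUof x hx hxP)
  have htop_other : ∀ x ∈ U, x ∉ pk.C → x ∉ P' → ∃ m ∈ pk.f x,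
      (∀ w, p m = some w → w ∉ U') ∧ (∀ u ∈ pk.f x, u ≠ m → ∃ w ∈ pk.f x, p u = some w) := by
    intro x hxU hxC hxP
    obtain ⟨m, hm, hmout, hrest⟩ := pk.top x hxU hxC
    refine ⟨m, hm, ?_, hrest⟩
    intro w hpw hwU'
    rcases (hU' w).mp hwU' with rfl | hwU
    · have hmC : m ∉ pk.C := pk.openNotC x hxU hxC m hm
      have hmA : m ∈ A := ⟨hpw, hmC⟩
      have e : pk.f m = pk.f x := pk.eqcl x hxU m hm
      exact hxP (hfu_subP m hmA (e.symm ▸ pk.mem x hxU))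
    · exact hmout w hpw hwU
  have hCP : Disjoint pk.C P' := Set.disjoint_left.mpr (fun x hxC hxP => hPnotC x hxP hxC)
  have hCP' : (pk.C ∪ P').ncard = pk.C.ncard + P'.ncard :=
    Set.ncard_union_eq hCP (Set.toFinite _) (Set.toFinite _)
  have htokbound : ((Tok p (pk.C ∪ P')).ncard : ℝ) ≤
      ((Tok p pk.C).ncard : ℝ) - ((Dset p P').ncard : ℝ) + 1 := by
    have h := tok_ncard_le p pk.C P' {v} ?_ hDsubTok
    · simpa using h
    · intro w hw u hpw
      rcases hstr w hw u hpw with h' | h'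
      · exact Or.inl h'
      · exact Or.inr (by simp [h'])
  have hκ0 : (0:ℝ) ≤ κ := Nat.cast_nonneg κ
  by_cases hb2 : 2 ≤ (Dset p P').ncard
  · -- EVENT case
    set f'' : V → Set V := fun w => if w = v then {v} else pk.f w with hf''def
    have hf''v : f'' v = {v} := by rw [hf''def]; simp
    have hf''o : ∀ x, x ≠ v → f'' x = pk.f x := by intro x hx; rw [hf''def]; simp [hx]
    set A' : Set V := {u | u ∈ A ∧ (pk.f u).ncard < sm} with hA'def
    set bad' : Set V := pk.bad ∪ ({v} ∪ ⋃ u ∈ A', pk.f u) with hbad'def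
    have hA'A : A' ⊆ A := fun u hu => hu.1
    have hxU_of : ∀ x ∈ U', x ≠ v → x ∈ U := by
      intro x hx hxv
      rcases (hU' x).mp hx with rfl | h
      · exact absurd rfl hxv
      · exact h
    have hbadsub' : bad' ⊆ pk.C ∪ P' := by
      rintro x (hx | hx)
      · exact Or.inl (pk.badsub hx)
      · rcases hx with hx | hx
        · exact Or.inr (by rw [Set.mem_singleton_iff.mp hx]; exact hvP)
        · obtain ⟨u, hu, hxu⟩ := Set.mem_iUnion₂.mp hx
          exact Or.inr (hfu_subP u (hA'A hu) hxu)
    refine ⟨⟨f'', pk.C ∪ P', bad', ?_, ?_, ?_, ?_,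
      Set.union_subset (pk.Csub.trans hUU') hPsubU', hbadsub', ?_, ?_, ?_, ?_, ?_, ?_⟩⟩
    · -- mem
      intro x hx
      by_cases hxv : x = v
      · rw [hxv, hf''v]; exact rfl
      · rw [hf''o x hxv]; exact pk.mem x (hxU_of x hx hxv)
    · -- subU
      intro x hx
      by_cases hxv : x = v
      · rw [hxv, hf''v]
        exact Set.singleton_subset_iff.mpr hvU'
      · rw [hf''o x hxv]
        exact (pk.subU x (hxU_of x hx hxv)).trans hUU'
    · -- eqcl
      intro x hx w hw
      by_cases hxv : x = v
      · rw [hxv, hf''v] at hw ⊢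
        rw [Set.mem_singleton_iff.mp hw]
        exact hf''v
      · rw [hf''o x hxv] at hw ⊢
        have hxU : x ∈ U := hxU_of x hx hxv
        have hwv : w ≠ v := by
          intro h
          exact hvU (pk.subU x hxU (h ▸ hw))
        rw [hf''o w hwv]
        exact pk.eqcl x hxU w hw
    · -- conn
      intro x hx
      by_cases hxv : x = v
      · rw [hxv, hf''v]; exact induce_singleton_connected v
      · rw [hf''o x hxv]; exact pk.conn x (hxU_of x hx hxv)
    · -- closedSub
      rintro x hxC'
      by_cases hxv : x = v
      · rw [hxv, hf''v]
        exact Set.singleton_subset_iff.mpr (Or.inr hvP)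
      · rw [hf''o x hxv]
        rcases hxC' with hx | hx
        · exact (pk.closedSub x hx).trans Set.subset_union_left
        · rcases (hmemP x).mp hx with rfl | ⟨u, hu, hxu⟩
          · exact absurd rfl hxv
          · have e : pk.f x = pk.f u := pk.eqcl u (hA_U u hu) x hxu
            rw [e]
            exact (hfu_subP u hu).trans Set.subset_union_right
    · -- iso
      rintro x hxC' hxb
      have hxv : x ≠ v := by
        intro h
        exact hxb (Or.inr (Or.inl (by rw [h]; rfl)))
      rw [hf''o x hxv]
      rcases hxC' with hx | hx
      · exact pk.iso x hx (fun h => hxb (Or.inl h))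
      · rcases (hmemP x).mp hx with rfl | ⟨u, hu, hxu⟩
        · exact absurd rfl hxv
        · have hularge : sm ≤ (pk.f u).ncard := by
            by_contra hlt
            push_neg at hlt
            exact hxb (Or.inr (Or.inr (Set.mem_iUnion₂.mpr ⟨u, ⟨hu, hlt⟩, hxu⟩)))
          have hDu : (Dset p (pk.f u)).ncard = 0 := by
            obtain ⟨h1, h2, h3⟩ := pk.openb u (hA_U u hu) hu.2
            interval_cases h : (Dset p (pk.f u)).ncard
            · rfl
            · exact absurd (h3 rfl) (by omega)
          have e : pk.f x = pk.f u := pk.eqcl u (hA_U u hu) x hxu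
          rw [e]
          have hcutu : (cutSet T (pk.f u)).ncard ≤ 1 := by
            calc (cutSet T (pk.f u)).ncard
                ≤ ((Dset p (pk.f u)) ∪ {w | p u = some w}).ncard :=
                  Set.ncard_le_ncard (cut_subset p Hadj (pk.f u) u
                    (fun x' hx' w hpw => hu_top u hu x' hx' w hpw)) (Set.toFinite _)
              _ ≤ (Dset p (pk.f u)).ncard + ({w | p u = some w} : Set V).ncard :=
                  Set.ncard_union_le _ _
              _ ≤ 1 := by
                  have := pset_ncard p u
                  omega
          refine mkIso T x (pk.f u) hxu (pk.conn u (hA_U u hu)) kreal δ hδ0 ?_ 1 hcutu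
            (by omega) ?_
          · calc ((pk.f u).ncard : ℝ) ≤ Kmax := by exact_mod_cast pk.size u (hA_U u hu)
              _ ≤ kreal := hKk
          · have hle : (sm:ℝ) ≤ (pk.f u).ncard := by exact_mod_cast hularge
            calc ((1:ℕ):ℝ) = 1 := by norm_num
              _ ≤ δ * sm := by nlinarith
              _ ≤ δ * (pk.f u).ncard := by gcongr
    · -- size
      intro x hx
      by_cases hxv : x = v
      · rw [hxv, hf''v]
        have : ({v} : Set V).ncard = 1 := Set.ncard_singleton v
        omega
      · rw [hf''o x hxv]
        exact pk.size x (hxU_of x hx hxv)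
    · -- top
      rintro x hx hxC'
      have hxP : x ∉ P' := fun h => hxC' (Or.inr h)
      have hxv : x ≠ v := fun h => hxP (h ▸ hvP)
      have hxC : x ∉ pk.C := fun h => hxC' (Or.inl h)
      obtain ⟨m, hm, hmout, hrest⟩ := htop_other x (hxU_of x hx hxv) hxC hxP
      rw [hf''o x hxv]
      exact ⟨m, hm, hmout, hrest⟩
    · -- openb
      rintro x hx hxC'
      have hxP : x ∉ P' := fun h => hxC' (Or.inr h)
      have hxv : x ≠ v := fun h => hxP (h ▸ hvP)
      have hxC : x ∉ pk.C := fun h => hxC' (Or.inl h)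
      rw [hf''o x hxv]
      exact pk.openb x (hxU_of x hx hxv) hxC
    · -- count
      have hA'd : A'.ncard ≤ d := le_trans (Set.ncard_le_ncard hA'A (Set.toFinite _)) hAd
      have hbadcard : bad'.ncard ≤ pk.bad.ncard + κ := by
        calc bad'.ncard ≤ pk.bad.ncard + ({v} ∪ ⋃ u ∈ A', pk.f u).ncard :=
              Set.ncard_union_le _ _
          _ ≤ pk.bad.ncard + (({v} : Set V).ncard + (⋃ u ∈ A', pk.f u).ncard) := by
              gcongr
              exact Set.ncard_union_le _ _
          _ ≤ pk.bad.ncard + (1 + A'.ncard * (sm - 1)) := by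
              gcongr
              · simp
              · exact ncard_biUnion_le A' (Set.toFinite _) pk.f (sm - 1)
                  (fun u hu => by have := hu.2; omega)
          _ ≤ pk.bad.ncard + (1 + d * (sm - 1)) := by gcongr
          _ ≤ pk.bad.ncard + κ := by omega
      have hC'card : (((pk.C ∪ P').ncard : ℕ) : ℝ) = (pk.C.ncard : ℝ) + (P'.ncard : ℝ) := by
        exact_mod_cast hCP'
      have hbR : (2:ℝ) ≤ ((Dset p P').ncard : ℝ) := by exact_mod_cast hb2
      calc (bad'.ncard : ℝ) + κ * ((Tok p (pk.C ∪ P')).ncard : ℝ)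
          ≤ ((pk.bad.ncard : ℝ) + κ)
            + κ * (((Tok p pk.C).ncard : ℝ) - ((Dset p P').ncard : ℝ) + 1) := by
            gcongr
            exact_mod_cast hbadcard
        _ = ((pk.bad.ncard : ℝ) + κ * ((Tok p pk.C).ncard : ℝ))
            + κ * (2 - ((Dset p P').ncard:ℝ)) := by ring
        _ ≤ ε/60 * (pk.C.ncard : ℝ) + 0 := by
            refine add_le_add pk.count ?_
            have : (2:ℝ) - ((Dset p P').ncard:ℝ) ≤ 0 := by linarith
            exact mul_nonpos_of_nonneg_of_nonpos hκ0 this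
        _ ≤ ε/60 * ((pk.C ∪ P').ncard : ℝ) := by
            rw [hC'card, add_zero]
            have h0 : (0:ℝ) ≤ P'.ncard := Nat.cast_nonneg _
            nlinarith
      
  by_cases hcl : (smid ≤ P'.ncard ∧ (Dset p P').ncard = 0) ∨
      (sm ≤ P'.ncard ∧ (Dset p P').ncard = 1)
  · -- CLOSE case
    have hb1 : (Dset p P').ncard ≤ 1 := by
      rcases hcl with ⟨-, h⟩ | ⟨-, h⟩ <;> omega
    have hcut : (cutSet T P').ncard ≤ (Dset p P').ncard + 1 := by
      calc (cutSet T P').ncard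
          ≤ ((Dset p P') ∪ {w | p v = some w}).ncard :=
            Set.ncard_le_ncard (cut_subset p Hadj P' v hstr) (Set.toFinite _)
        _ ≤ (Dset p P').ncard + ({w | p v = some w} : Set V).ncard := Set.ncard_union_le _ _
        _ ≤ (Dset p P').ncard + 1 := by
            have := pset_ncard p v
            omega
    have hisoP : ∀ x ∈ P', IsIsoNbhd T x P' kreal δ 2 := by
      intro x hxP
      refine mkIso T x P' hxP hconnP kreal δ hδ0 ?_ ((Dset p P').ncard + 1) hcut (by omega) ?_
      · calc (P'.ncard : ℝ) ≤ Kmax := by exact_mod_cast hsizeK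
          _ ≤ kreal := hKk
      · rcases hcl with ⟨hsz, hb0⟩ | ⟨hsz, hb1'⟩
        · rw [hb0]
          have hle : (smid:ℝ) ≤ P'.ncard := by exact_mod_cast hsz
          calc ((0+1:ℕ):ℝ) = 1 := by norm_num
            _ ≤ δ * smid := hcond1
            _ ≤ δ * P'.ncard := by gcongr
        · rw [hb1']
          have hle : (sm:ℝ) ≤ P'.ncard := by exact_mod_cast hsz
          calc ((1+1:ℕ):ℝ) = 2 := by norm_num
            _ ≤ δ * sm := hcond2
            _ ≤ δ * P'.ncard := by gcongr
    refine ⟨⟨f', pk.C ∪ P', pk.bad, hmem', hsub', heqcl', hconn',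
      Set.union_subset (pk.Csub.trans hUU') hPsubU',
      pk.badsub.trans Set.subset_union_left, ?_, ?_, hsize', ?_, ?_, ?_⟩⟩
    · -- closedSub
      rintro x (hx | hx)
      · rw [hf'out x (fun h => hPnotC x h hx)]
        exact (pk.closedSub x hx).trans Set.subset_union_left
      · rw [hf'in x hx]
        exact Set.subset_union_right
    · -- iso
      rintro x (hx | hx) hxb
      · rw [hf'out x (fun h => hPnotC x h hx)]
        exact pk.iso x hx hxb
      · rw [hf'in x hx]
        exact hisoP x hx
    · -- top
      rintro x hx hxC
      have hxP : x ∉ P' := fun h => hxC (Or.inr h)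
      have hxC' : x ∉ pk.C := fun h => hxC (Or.inl h)
      obtain ⟨m, hm, hmout, hrest⟩ := htop_other x (hUof x hx hxP) hxC' hxP
      rw [hf'out x hxP]
      exact ⟨m, hm, hmout, hrest⟩
    · -- openb
      rintro x hx hxC
      have hxP : x ∉ P' := fun h => hxC (Or.inr h)
      have hxC' : x ∉ pk.C := fun h => hxC (Or.inl h)
      rw [hf'out x hxP]
      exact pk.openb x (hUof x hx hxP) hxC'
    · -- count
      have hC'card : (((pk.C ∪ P').ncard : ℕ) : ℝ) = (pk.C.ncard : ℝ) + (P'.ncard : ℝ) := by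
        exact_mod_cast hCP'
      have hkey : (κ:ℝ) * (1 - ((Dset p P').ncard:ℝ)) ≤ ε/60 * (P'.ncard:ℝ) := by
        rcases hcl with ⟨hsz, hb0⟩ | ⟨hsz, hb1'⟩
        · rw [hb0]
          have hle : (smid:ℝ) ≤ P'.ncard := by exact_mod_cast hsz
          have hε60 : (0:ℝ) < ε/60 := by linarith
          calc (κ:ℝ) * (1 - (0:ℕ)) = κ := by norm_num
            _ ≤ ε/60 * smid := hκs
            _ ≤ ε/60 * P'.ncard := by gcongr
        · rw [hb1']
          have h0 : (0:ℝ) ≤ ε/60 * (P'.ncard:ℝ) := by positivity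
          simpa using h0
      calc (pk.bad.ncard : ℝ) + κ * ((Tok p (pk.C ∪ P')).ncard : ℝ)
          ≤ (pk.bad.ncard : ℝ) + κ * (((Tok p pk.C).ncard : ℝ) - ((Dset p P').ncard : ℝ) + 1) := by
            gcongr
        _ = ((pk.bad.ncard : ℝ) + κ * ((Tok p pk.C).ncard : ℝ))
            + κ * (1 - ((Dset p P').ncard:ℝ)) := by ring
        _ ≤ ε/60 * (pk.C.ncard : ℝ) + ε/60 * (P'.ncard:ℝ) := add_le_add pk.count hkey
        _ = ε/60 * ((pk.C ∪ P').ncard : ℝ) := by rw [hC'card]; ring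
  · -- OPEN case
    refine ⟨⟨f', pk.C, pk.bad, hmem', hsub', heqcl', hconn', pk.Csub.trans hUU',
      pk.badsub, ?_, ?_, hsize', ?_, ?_, pk.count⟩⟩
    · intro x hx
      rw [hf'out x (fun h => hPnotC x h hx)]
      exact pk.closedSub x hx
    · intro x hx hxb
      rw [hf'out x (fun h => hPnotC x h hx)]
      exact pk.iso x hx hxb
    · intro x hx hxC
      by_cases hxP : x ∈ P'
      · rw [hf'in x hxP]
        exact ⟨v, hvP, htopP1, htopP2⟩
      · obtain ⟨m, hm, hmout, hrest⟩ := htop_other x (hUof x hx hxP) hxC hxP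
        rw [hf'out x hxP]
        exact ⟨m, hm, hmout, hrest⟩
    · intro x hx hxC
      by_cases hxP : x ∈ P'
      · rw [hf'in x hxP]
        push_neg at hb2 hcl
        obtain ⟨h1, h2⟩ := hcl
        refine ⟨by omega, ?_, ?_⟩
        · intro h0
          by_contra hge
          push_neg at hge
          exact h1 hge h0
        · intro hb1
          by_contra hge
          push_neg at hge
          exact h2 hge hb1
      · obtain h := pk.openb x (hUof x hx hxP) hxC
        rw [hf'out x hxP]
        exact h


lemma finalize (T : SimpleGraph V) (p : V → Option V)
    (Hadj : ∀ u w, T.Adj u w ↔ (p u = some w ∨ p w = some u))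
    (hδ0 : 0 < δ) (hε0 : 0 < ε) (hsmκ : sm ≤ κ) (hKk : (Kmax:ℝ) ≤ kreal) :
    ∀ j : ℕ, ∀ pk : Pack T p sm smid Kmax κ δ ε kreal Set.univ,
    (Set.univ \ pk.C).ncard ≤ j →
    ∃ f : V → Set V, (∀ v, v ∈ f v) ∧ (∀ v, ∀ w ∈ f v, f w = f v) ∧
      (∀ v, (f v).ncard ≤ Kmax) ∧ (∀ v, (T.induce (f v)).Connected) ∧
      ∃ bad : Set V, (∀ v, v ∉ bad → IsIsoNbhd T v (f v) kreal δ 2) ∧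
        (bad.ncard : ℝ) ≤ ε/60 * (Fintype.card V : ℝ) := by
  classical
  intro j
  induction j with
  | zero =>
    intro pk hj
    have hC : pk.C = Set.univ := by
      have : Set.univ \ pk.C = ∅ := by
        rcases Set.eq_empty_or_nonempty (Set.univ \ pk.C) with h | h
        · exact h
        · exact absurd hj (by
            have := (Set.ncard_pos (Set.toFinite _)).mpr h
            omega)
      have := Set.diff_eq_empty.mp this
      exact Set.eq_univ_of_univ_subset this
    have hTok : Tok p pk.C = ∅ := by
      ext w
      simp only [Tok, hC, Set.mem_univ, Set.mem_setOf_eq, Set.mem_empty_iff_false, iff_false,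
        not_and, not_exists]
      intro _ u _
      simp
    refine ⟨pk.f, fun v => pk.mem v (Set.mem_univ v), fun v w hw => pk.eqcl v (Set.mem_univ v) w hw,
      fun v => pk.size v (Set.mem_univ v), fun v => pk.conn v (Set.mem_univ v),
      pk.bad, fun v hv => pk.iso v (by rw [hC]; exact Set.mem_univ v) hv, ?_⟩
    have := pk.count
    rw [hTok, hC] at this
    simp only [Set.ncard_empty, Nat.cast_zero, mul_zero, add_zero] at this
    calc (pk.bad.ncard : ℝ) ≤ ε/60 * (Set.univ : Set V).ncard := this
      _ = ε/60 * (Fintype.card V : ℝ) := by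
          rw [Set.ncard_univ, Nat.card_eq_fintype_card]
  | succ j ih =>
    intro pk hj
    rcases Set.eq_empty_or_nonempty (Set.univ \ pk.C) with hempty | ⟨v, hv⟩
    · exact ih pk (by rw [hempty]; simp)
    · have hvC : v ∉ pk.C := hv.2
      set P : Set V := pk.f v with hPdef
      have hvP : v ∈ P := pk.mem v (Set.mem_univ v)
      obtain ⟨m, hmP, hmout, hrest⟩ := pk.top v (Set.mem_univ v) hvC
      have hpm : p m = none := by
        cases h : p m with
        | none => rfl
        | some w => exact absurd (Set.mem_univ w) (hmout w h)
      obtain ⟨hb1, hb0small, hb1small⟩ := pk.openb v (Set.mem_univ v) hvC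
      rw [← hPdef] at hb1 hb0small hb1small
      have hPnotC : ∀ x ∈ P, x ∉ pk.C := fun x hx => pk.openNotC v (Set.mem_univ v) hvC x hx
      have hPeq : ∀ x ∈ P, pk.f x = P := fun x hx => pk.eqcl v (Set.mem_univ v) x hx
      have hstr0 : ∀ x ∈ P, ∀ w, p x = some w → w ∈ P ∨ x ∈ (∅ : Set V) := by
        intro x hx w hpw
        by_cases hxm : x = m
        · rw [hxm, hpm] at hpw; cases hpw
        · obtain ⟨w', hw', hpw'⟩ := hrest x hx hxm
          rw [hpw] at hpw'
          obtain rfl : w = w' := Option.some_injective _ hpw'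
          exact Or.inl hw'
      have hDsub : Dset p P ⊆ Tok p pk.C := by
        rintro w ⟨hwP, u', hu'P, hpw⟩
        have hwC : w ∈ pk.C := by
          by_contra hwC
          obtain ⟨mw, hmw, hmwout, hrestw⟩ := pk.top w (Set.mem_univ w) hwC
          by_cases hwm : w = mw
          · have hpmw : p mw = none := by
              cases h : p mw with
              | none => rfl
              | some z => exact absurd (Set.mem_univ z) (hmwout z h)
            rw [hwm, hpmw] at hpw; cases hpw
          · obtain ⟨w', hw', hpw'⟩ := hrestw w (pk.mem w (Set.mem_univ w)) hwm
            rw [hpw] at hpw'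
            obtain rfl : u' = w' := Option.some_injective _ hpw'
            have e1 : pk.f u' = pk.f w := pk.eqcl w (Set.mem_univ w) u' hw'
            have e2 : pk.f u' = P := hPeq u' hu'P
            have e3 : pk.f w = P := by rw [← e1, e2]
            exact hwP (e3 ▸ pk.mem w (Set.mem_univ w))
        exact ⟨hwC, u', hpw, hPnotC u' hu'P⟩
      have htok : ((Tok p (pk.C ∪ P)).ncard : ℝ) ≤
          ((Tok p pk.C).ncard : ℝ) - ((Dset p P).ncard : ℝ) := by
        have h := tok_ncard_le p pk.C P ∅ hstr0 hDsub
        simpa using h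
      have hCP : Disjoint pk.C P := Set.disjoint_right.mpr (fun x hxP hxC => hPnotC x hxP hxC)
      have hCP' : (pk.C ∪ P).ncard = pk.C.ncard + P.ncard :=
        Set.ncard_union_eq hCP (Set.toFinite _) (Set.toFinite _)
      by_cases hb : (Dset p P).ncard = 0
      · -- close as a good part (η = 0)
        have hDempty : Dset p P = ∅ := (Set.ncard_eq_zero (Set.toFinite _)).mp hb
        have hcutP : cutSet T P = ∅ := by
          have hsub := cut_subset p Hadj P m (fun x' hx' w hpw => by
            rcases hstr0 x' hx' w hpw with h | h
            · exact Or.inl h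
            · cases h)
          rw [hDempty] at hsub
          have hpmset : ({w | p m = some w} : Set V) = ∅ := by
            ext w; simp [hpm]
          rw [hpmset] at hsub
          simpa using Set.subset_empty_iff.mp (by simpa using hsub)
        have hisoP : ∀ x ∈ P, IsIsoNbhd T x P kreal δ 2 := by
          intro x hx
          refine mkIso T x P hx (hPdef ▸ pk.conn v (Set.mem_univ v)) kreal δ hδ0 ?_ 0 ?_
            (by omega) ?_
          · calc (P.ncard : ℝ) ≤ Kmax := by exact_mod_cast pk.size v (Set.mem_univ v)
              _ ≤ kreal := hKk
          · rw [hcutP]; simp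
          · push_cast
            positivity
        refine ih ⟨pk.f, pk.C ∪ P, pk.bad,
          pk.mem, pk.subU, pk.eqcl, pk.conn, Set.subset_univ _,
          pk.badsub.trans Set.subset_union_left, ?_, ?_, pk.size, ?_, ?_, ?_⟩ ?_
        · rintro x (hx | hx)
          · exact (pk.closedSub x hx).trans Set.subset_union_left
          · rw [hPeq x hx]
            exact Set.subset_union_right
        · rintro x (hx | hx) hxb
          · exact pk.iso x hx hxb
          · rw [hPeq x hx]
            exact hisoP x hx
        · intro x hx hxC'
          exact pk.top x hx (fun h => hxC' (Or.inl h))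
        · intro x hx hxC'
          exact pk.openb x hx (fun h => hxC' (Or.inl h))
        · -- count
          calc (pk.bad.ncard : ℝ) + κ * ((Tok p (pk.C ∪ P)).ncard : ℝ)
              ≤ (pk.bad.ncard : ℝ) + κ * (((Tok p pk.C).ncard : ℝ) - ((Dset p P).ncard : ℝ)) := by
                gcongr
            _ ≤ (pk.bad.ncard : ℝ) + κ * ((Tok p pk.C).ncard : ℝ) := by
                have h0 : (0:ℝ) ≤ ((Dset p P).ncard : ℝ) := Nat.cast_nonneg _
                nlinarith [Nat.cast_nonneg (α := ℝ) κ]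
            _ ≤ ε/60 * (pk.C.ncard : ℝ) := pk.count
            _ ≤ ε/60 * (((pk.C ∪ P).ncard : ℕ) : ℝ) := by
                have hmono : (pk.C.ncard:ℝ) ≤ (((pk.C ∪ P).ncard : ℕ):ℝ) := by
                  exact_mod_cast Set.ncard_le_ncard Set.subset_union_left (Set.toFinite _)
                nlinarith
        · -- measure
          have hsub2 : Set.univ \ (pk.C ∪ P) ⊆ (Set.univ \ pk.C) \ {v} := by
            intro x hx
            refine ⟨⟨Set.mem_univ x, fun h => hx.2 (Or.inl h)⟩, ?_⟩
            intro h
            exact hx.2 (Or.inr ((Set.mem_singleton_iff.mp h) ▸ hvP))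
          calc (Set.univ \ (pk.C ∪ P)).ncard
              ≤ ((Set.univ \ pk.C) \ {v}).ncard := Set.ncard_le_ncard hsub2 (Set.toFinite _)
            _ = (Set.univ \ pk.C).ncard - 1 := Set.ncard_diff_singleton_of_mem hv
            _ ≤ j := by
                have hpos : 1 ≤ (Set.univ \ pk.C).ncard :=
                  (Set.ncard_pos (Set.toFinite _)).mpr ⟨v, hv⟩
                omega
      · -- close as a bad part (η could be 2 but part too small)
        have hb1' : (Dset p P).ncard = 1 := by omega
        have hPsmall : P.ncard ≤ sm - 1 := by
          have := hb1small hb1'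
          omega
        refine ih ⟨pk.f, pk.C ∪ P, pk.bad ∪ P,
          pk.mem, pk.subU, pk.eqcl, pk.conn, Set.subset_univ _,
          Set.union_subset_union pk.badsub (le_refl P), ?_, ?_, pk.size, ?_, ?_, ?_⟩ ?_
        · rintro x (hx | hx)
          · exact (pk.closedSub x hx).trans Set.subset_union_left
          · rw [hPeq x hx]
            exact Set.subset_union_right
        · rintro x (hx | hx) hxb
          · exact pk.iso x hx (fun h => hxb (Or.inl h))
          · exact absurd (Or.inr hx) hxb
        · intro x hx hxC'
          exact pk.top x hx (fun h => hxC' (Or.inl h))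
        · intro x hx hxC'
          exact pk.openb x hx (fun h => hxC' (Or.inl h))
        · -- count
          have hbadcard : ((pk.bad ∪ P).ncard : ℝ) ≤ (pk.bad.ncard : ℝ) + (P.ncard : ℝ) := by
            exact_mod_cast Set.ncard_union_le _ _
          have hPκ : (P.ncard : ℝ) ≤ κ := by
            have h : P.ncard ≤ κ := by omega
            exact_mod_cast h
          have hDge : (1:ℝ) ≤ ((Dset p P).ncard : ℝ) := by exact_mod_cast Nat.one_le_iff_ne_zero.mpr hb
          have hC'mono : (pk.C.ncard : ℝ) ≤ (((pk.C ∪ P).ncard : ℕ) : ℝ) := by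
            exact_mod_cast Set.ncard_le_ncard Set.subset_union_left (Set.toFinite _)
          have hκ0 : (0:ℝ) ≤ κ := Nat.cast_nonneg κ
          calc ((pk.bad ∪ P).ncard : ℝ) + κ * ((Tok p (pk.C ∪ P)).ncard : ℝ)
              ≤ ((pk.bad.ncard : ℝ) + (P.ncard : ℝ))
                + κ * (((Tok p pk.C).ncard : ℝ) - ((Dset p P).ncard : ℝ)) := by
                gcongr
            _ ≤ ((pk.bad.ncard : ℝ) + κ * ((Tok p pk.C).ncard : ℝ))
                + ((P.ncard : ℝ) - κ * ((Dset p P).ncard : ℝ)) := by ring_nf; linarith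
            _ ≤ ε/60 * (pk.C.ncard : ℝ) + 0 := by
                refine add_le_add pk.count ?_
                nlinarith
            _ ≤ ε/60 * (((pk.C ∪ P).ncard : ℕ) : ℝ) := by
                rw [add_zero]
                nlinarith [hC'mono, hε0]
        · -- measure
          have hsub2 : Set.univ \ (pk.C ∪ P) ⊆ (Set.univ \ pk.C) \ {v} := by
            intro x hx
            refine ⟨⟨Set.mem_univ x, fun h => hx.2 (Or.inl h)⟩, ?_⟩
            intro h
            exact hx.2 (Or.inr ((Set.mem_singleton_iff.mp h) ▸ hvP))
          calc (Set.univ \ (pk.C ∪ P)).ncard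
              ≤ ((Set.univ \ pk.C) \ {v}).ncard := Set.ncard_le_ncard hsub2 (Set.toFinite _)
            _ = (Set.univ \ pk.C).ncard - 1 := Set.ncard_diff_singleton_of_mem hv
            _ ≤ j := by
                have hpos : 1 ≤ (Set.univ \ pk.C).ncard :=
                  (Set.ncard_pos (Set.toFinite _)).mpr ⟨v, hv⟩
                omega


lemma pack_univ (T : SimpleGraph V) (p : V → Option V) (idx : V → ℕ)
    (Hinj : Function.Injective idx)
    (Hadj : ∀ u w, T.Adj u w ↔ (p u = some w ∨ p w = some u))
    (Hlt : ∀ u w, p u = some w → idx u < idx w)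
    (d : ℕ) (hδ0 : 0 < δ) (hε0 : 0 < ε)
    (hdeg : ∀ v : V, (T.neighborSet v).ncard ≤ d)
    (hsm1 : 1 ≤ sm) (hsmid1 : 1 ≤ smid) (hsm_smid : sm ≤ smid)
    (hsmidK : smid ≤ Kmax) (hdsmidK : 1 + d * (smid - 1) ≤ Kmax)
    (hκ1 : 1 + d * (sm - 1) ≤ κ) (hκs : (κ:ℝ) ≤ ε/60 * smid)
    (hcond1 : (1:ℝ) ≤ δ * smid) (hcond2 : (2:ℝ) ≤ δ * sm)
    (hKk : (Kmax:ℝ) ≤ kreal) :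
    Nonempty (Pack T p sm smid Kmax κ δ ε kreal Set.univ) := by
  classical
  have h : ∀ i, Nonempty (Pack T p sm smid Kmax κ δ ε kreal {x | idx x < i}) := by
    intro i
    induction i with
    | zero =>
      refine ⟨⟨fun x => {x}, ∅, ∅, ?_, ?_, ?_, ?_, ?_, ?_, ?_, ?_, ?_, ?_, ?_, ?_⟩⟩ <;>
        first
        | (intro x hx; exact absurd hx (by simp))
        | (intro x hx; exact absurd hx (by simp [Set.mem_setOf_eq]))
        | exact Set.empty_subset _
        | skip
      · have hTok : Tok p (∅ : Set V) = ∅ := by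
          ext w; simp [Tok]
        rw [hTok]
        simp
    | succ i ih =>
      obtain ⟨pk⟩ := ih
      by_cases hv : ∃ v, idx v = i
      · obtain ⟨v, hvi⟩ := hv
        exact step T p idx Hinj Hadj Hlt d hδ0 hε0 hdeg hsm1 hsmid1 hsm_smid hsmidK hdsmidK
          hκ1 hκs hcond1 hcond2 hKk i v hvi pk
      · push_neg at hv
        have hset : {x : V | idx x < i + 1} = {x : V | idx x < i} := by
          ext x
          simp only [Set.mem_setOf_eq]
          constructor
          · intro hx
            have := hv x
            omega
          · omega
        rw [hset]
        exact ⟨pk⟩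
  obtain ⟨pk⟩ := h ((Finset.univ.sup idx) + 1)
  have huniv : {x : V | idx x < (Finset.univ.sup idx) + 1} = Set.univ := by
    ext x
    simp only [Set.mem_setOf_eq, Set.mem_univ, iff_true]
    exact Nat.lt_succ_of_le (Finset.le_sup (Finset.mem_univ x))
  rw [huniv] at pk
  exact ⟨pk⟩


end ForestAux

set_option maxHeartbeats 1000000 in
theorem forest_strong_partition {V : Type} [Fintype V]
    (T : SimpleGraph V) (hacyclic : T.IsAcyclic)
    (d : ℕ) (hd : 2 ≤ d) (hdeg : ∀ v : V, (T.neighborSet v).ncard ≤ d)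
    (ε δ : ℝ) (hε : ε ∈ Set.Ioo (0 : ℝ) (1/2)) (hδ : δ ∈ Set.Ioo (0 : ℝ) (1/2)) :
    ∃ f : V → Set V,
      (∀ v : V, v ∈ f v) ∧
      (∀ v : V, ∀ w ∈ f v, f w = f v) ∧
      (∀ v : V, ((f v).ncard : ℝ) ≤ 481 * d ^ 2 / (δ * ε)) ∧
      (∀ v : V, (T.induce (f v)).Connected) ∧
      (1 - ε / 60) * (Fintype.card V : ℝ) ≤
        (({w : V | IsIsoNbhd T w (f w) (481 * d ^ 2 / (δ * ε)) δ 2}).ncard : ℝ) := by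
  classical
  obtain ⟨hε0, hε2⟩ := hε
  obtain ⟨hδ0, hδ2⟩ := hδ
  obtain ⟨idx, p, Hinj, H2, H3⟩ := ForestAux.exists_elim_order hacyclic
  have Hadj : ∀ u w, T.Adj u w ↔ (p u = some w ∨ p w = some u) := by
    intro u w
    constructor
    · intro ha
      have hne : idx u ≠ idx w := fun h => ha.ne (Hinj h)
      rcases Nat.lt_or_ge (idx u) (idx w) with h | h
      · exact Or.inl (H3 u w ha h)
      · exact Or.inr (H3 w u ha.symm (by omega))
    · rintro (h | h)
      · exact (H2 u w h).1
      · exact ((H2 w u h).1).symm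
  have Hlt : ∀ u w, p u = some w → idx u < idx w := fun u w h => (H2 u w h).2
  -- constants
  set sm : ℕ := ⌈(2:ℝ)/δ⌉₊ with hsmdef
  set smid : ℕ := ⌈(120:ℝ)*d*sm/ε⌉₊ with hsmiddef
  set κ : ℕ := d * sm with hκdef
  set Kmax : ℕ := d * smid with hKdef
  set kreal : ℝ := 481 * d ^ 2 / (δ * ε) with hkrealdef
  have hd2 : (2:ℝ) ≤ d := by exact_mod_cast hd
  have hd0 : (0:ℝ) < d := by linarith
  have hsm_lb : (2:ℝ)/δ ≤ sm := Nat.le_ceil _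
  have hsm_ub : (sm:ℝ) < 2/δ + 1 := Nat.ceil_lt_add_one (by positivity)
  have hsm4 : (4:ℝ) ≤ sm := by
    have h4 : (4:ℝ) ≤ 2/δ := by
      rw [le_div_iff₀ hδ0]; linarith
    linarith
  have hsm1 : 1 ≤ sm := by
    have : (1:ℝ) ≤ sm := by linarith
    exact_mod_cast this
  have hsmid_lb : (120:ℝ)*d*sm/ε ≤ smid := Nat.le_ceil _
  have hsmid_ub : (smid:ℝ) < 120*d*sm/ε + 1 := Nat.ceil_lt_add_one (by positivity)
  have hsmpos : (0:ℝ) < sm := by linarith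
  have hsm_smid_R : (sm:ℝ) ≤ smid := by
    have h1 : (sm:ℝ) ≤ 120*(d:ℝ)*sm/ε := by
      rw [le_div_iff₀ hε0]
      nlinarith
    linarith
  have hsm_smid : sm ≤ smid := by exact_mod_cast hsm_smid_R
  have hsmid1 : 1 ≤ smid := le_trans hsm1 hsm_smid
  have hsmidK : smid ≤ Kmax := by
    calc smid = 1 * smid := (one_mul smid).symm
      _ ≤ d * smid := Nat.mul_le_mul_right smid (by omega)
  have hdsmidK : 1 + d * (smid - 1) ≤ Kmax := by
    have hpred : smid - 1 + 1 = smid := Nat.succ_pred_eq_of_pos hsmid1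
    have he : d * (smid - 1) + d = d * smid := by
      calc d * (smid - 1) + d = d * (smid - 1 + 1) := by ring
        _ = d * smid := by rw [hpred]
    omega
  have hκ1 : 1 + d * (sm - 1) ≤ κ := by
    have hpred : sm - 1 + 1 = sm := Nat.succ_pred_eq_of_pos hsm1
    have he : d * (sm - 1) + d = d * sm := by
      calc d * (sm - 1) + d = d * (sm - 1 + 1) := by ring
        _ = d * sm := by rw [hpred]
    omega
  have hκcast : (κ:ℝ) = (d:ℝ) * sm := by rw [hκdef]; push_cast; ring
  have hKcast : (Kmax:ℝ) = (d:ℝ) * smid := by rw [hKdef]; push_cast; ring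
  have hκs : (κ:ℝ) ≤ ε/60 * smid := by
    rw [hκcast]
    have h1 : ε/60 * (120*(d:ℝ)*sm/ε) = 2*((d:ℝ)*sm) := by
      field_simp
      ring
    have h2 : ε/60 * (120*(d:ℝ)*sm/ε) ≤ ε/60 * smid := by
      gcongr
    nlinarith
  have hcond2 : (2:ℝ) ≤ δ * sm := by
    have e : δ * (2/δ) = 2 := by field_simp
    nlinarith [mul_le_mul_of_nonneg_left hsm_lb hδ0.le]
  have hcond1 : (1:ℝ) ≤ δ * smid := by
    calc (1:ℝ) ≤ 2 := by norm_num
      _ ≤ δ * sm := hcond2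
      _ ≤ δ * smid := by gcongr
  have hsmκ : sm ≤ κ := by
    calc sm = 1 * sm := (one_mul sm).symm
      _ ≤ d * sm := Nat.mul_le_mul_right sm (by omega)
  have hsmR2 : (sm:ℝ) ≤ 5/(2*δ) := by
    have he : (5:ℝ)/(2*δ) - (2/δ + 1) = (1 - 2*δ)/(2*δ) := by
      field_simp
      ring
    have hnn : (0:ℝ) ≤ (1 - 2*δ)/(2*δ) := by
      apply div_nonneg
      · linarith
      · linarith
    linarith
  have hsmidR2 : (smid:ℝ) ≤ 301*(d:ℝ)/(δ*ε) := by
    have h1 : (120:ℝ)*d*sm/ε ≤ 120*(d:ℝ)*(5/(2*δ))/ε := by gcongr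
    have h2 : (120:ℝ)*(d:ℝ)*(5/(2*δ))/ε = 300*(d:ℝ)/(δ*ε) := by
      field_simp
      ring
    have h3 : (1:ℝ) ≤ (d:ℝ)/(δ*ε) := by
      rw [le_div_iff₀ (by positivity)]
      nlinarith
    have h4 : 300*(d:ℝ)/(δ*ε) + (d:ℝ)/(δ*ε) = 301*(d:ℝ)/(δ*ε) := by ring
    linarith
  have hKk : (Kmax:ℝ) ≤ kreal := by
    rw [hKcast, hkrealdef]
    have h1 : (d:ℝ) * smid ≤ (d:ℝ) * (301*(d:ℝ)/(δ*ε)) := by gcongr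
    have h2 : (d:ℝ) * (301*(d:ℝ)/(δ*ε)) = 301*(d:ℝ)^2/(δ*ε) := by ring
    have h3 : (301:ℝ)*(d:ℝ)^2/(δ*ε) ≤ 481*(d:ℝ)^2/(δ*ε) :=
      (div_le_div_iff_of_pos_right (by positivity)).mpr (by nlinarith)
    linarith
  obtain ⟨pk⟩ := ForestAux.pack_univ T p idx Hinj Hadj Hlt d hδ0 hε0 hdeg
    hsm1 hsmid1 hsm_smid hsmidK hdsmidK hκ1 hκs hcond1 hcond2 hKk
  obtain ⟨f, hmem, heq, hsize, hconn, bad, hiso, hbadcount⟩ :=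
    ForestAux.finalize T p Hadj hδ0 hε0 hsmκ hKk ((Set.univ \ pk.C).ncard) pk le_rfl
  refine ⟨f, hmem, heq, ?_, hconn, ?_⟩
  · intro v
    calc ((f v).ncard : ℝ) ≤ Kmax := by exact_mod_cast hsize v
      _ ≤ kreal := hKk
      _ = 481 * d ^ 2 / (δ * ε) := hkrealdef
  · have hsub : Set.univ \ bad ⊆ {w : V | IsIsoNbhd T w (f w) (481 * d ^ 2 / (δ * ε)) δ 2} := by
      intro w hw
      have := hiso w hw.2
      rwa [hkrealdef] at this
    have h1 : ((Set.univ \ bad).ncard : ℝ) ≤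
        (({w : V | IsIsoNbhd T w (f w) (481 * d ^ 2 / (δ * ε)) δ 2}).ncard : ℝ) := by
      exact_mod_cast Set.ncard_le_ncard hsub (Set.toFinite _)
    have hble : bad.ncard ≤ Fintype.card V := by
      have := Set.ncard_le_ncard (Set.subset_univ bad) (Set.toFinite _)
      rwa [Set.ncard_univ, Nat.card_eq_fintype_card] at this
    have h2 : ((Set.univ \ bad).ncard : ℝ) = (Fintype.card V : ℝ) - bad.ncard := by
      rw [Set.ncard_diff (Set.subset_univ bad) (Set.toFinite _)]
      rw [Set.ncard_univ, Nat.card_eq_fintype_card]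
      rw [Nat.cast_sub hble]
    linarith
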